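/- Let d ≥ 1 and let b = (b^i_{jk}) be a real tensor with b^i_{jk} = b^i_{kj} for all indices, defining the bilinear vector field B_b(x,y)^i = Σ_{j,k} b^i_{jk} x^j y^k. Then the following are equivalent: (a) x·B_b(x,x) = 0 and div_x B_b(x,x) = 0 for all x ∈ ℝ^d, and B_b(e_j,e_j) = 0 for all 1 ≤ j ≤ d; (b) b^i_{ii} = b^i_{ij} = b^i_{jj} = 0 for all 1 ≤ i,j ≤ d, and b^i_{jk} + b^j_{ik} + b^k_{ij} = 0 for all 1 ≤ i,j,k ≤ d. -/

import Mathlib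

open scoped BigOperators

/-- The bilinear vector field on `ℝ^d` determined by the coefficient tensor `b`:
`B_b(x,y)^i = ∑_{j,k} b^i_{jk} x^j y^k`. -/
noncomputable def Bb {d : ℕ} (b : Fin d → Fin d → Fin d → ℝ) (x y : Fin d → ℝ) : Fin d → ℝ :=
  fun i => ∑ j, ∑ k, b i j k * x j * y k

private lemma congr3 {d : ℕ} (f g : Fin d → Fin d → Fin d → ℝ)
    (h : ∀ i j k, f i j k = g i j k) :
    (∑ i, ∑ j, ∑ k, f i j k) = ∑ i, ∑ j, ∑ k, g i j k :=
  Finset.sum_congr rfl fun i _ => Finset.sum_congr rfl fun j _ =>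
    Finset.sum_congr rfl fun k _ => h i j k

private lemma swap12 {d : ℕ} (f : Fin d → Fin d → Fin d → ℝ) :
    (∑ i, ∑ j, ∑ k, f i j k) = ∑ i, ∑ j, ∑ k, f j i k :=
  Finset.sum_comm

private lemma rot3 {d : ℕ} (f : Fin d → Fin d → Fin d → ℝ) :
    (∑ i, ∑ j, ∑ k, f i j k) = ∑ i, ∑ j, ∑ k, f j k i :=
  (Finset.sum_congr rfl fun i _ => Finset.sum_comm).trans (Finset.sum_comm)

private lemma Bb_hasFDerivAt {d : ℕ} (b : Fin d → Fin d → Fin d → ℝ) (i : Fin d)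
    (x : Fin d → ℝ) :
    HasFDerivAt (fun y : Fin d → ℝ => Bb b y y i)
      (∑ j, ∑ k, b i j k • (x j • (ContinuousLinearMap.proj k : (Fin d → ℝ) →L[ℝ] ℝ)
        + x k • (ContinuousLinearMap.proj j : (Fin d → ℝ) →L[ℝ] ℝ))) x := by
  have : (fun y : Fin d → ℝ => Bb b y y i) = fun y => ∑ j, ∑ k, b i j k * y j * y k := rfl
  rw [this]
  apply HasFDerivAt.fun_sum; intro j _
  apply HasFDerivAt.fun_sum; intro k _
  have h1 : HasFDerivAt (fun y : Fin d → ℝ => y j)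
      (ContinuousLinearMap.proj j : (Fin d → ℝ) →L[ℝ] ℝ) x := hasFDerivAt_apply j x
  have h2 : HasFDerivAt (fun y : Fin d → ℝ => y k)
      (ContinuousLinearMap.proj k : (Fin d → ℝ) →L[ℝ] ℝ) x := hasFDerivAt_apply k x
  simpa [mul_assoc] using (h1.mul h2).const_mul (b i j k)

theorem stmt0 (d : ℕ) (hd : 1 ≤ d) (b : Fin d → Fin d → Fin d → ℝ)
    (hsym : ∀ i j k, b i j k = b i k j) :
    ((∀ x : Fin d → ℝ, ∑ i, x i * Bb b x x i = 0) ∧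
     (∀ x : Fin d → ℝ, ∑ i, fderiv ℝ (fun y => Bb b y y i) x (Pi.single i 1) = 0) ∧
     (∀ j : Fin d, Bb b (Pi.single j 1) (Pi.single j 1) = 0)) ↔
    ((∀ i j : Fin d, b i i i = 0 ∧ b i i j = 0 ∧ b i j j = 0) ∧
     (∀ i j k : Fin d, b i j k + b j i k + b k i j = 0)) := by
  constructor
  · rintro ⟨P1, _, P3⟩
    have z1 : ∀ u v : Fin d, b u v v = 0 := by
      intro u v
      have h := congrFun (P3 v) u
      simpa [Bb, Pi.single_apply, mul_ite, ite_mul, Finset.sum_ite_eq'] using h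
    have z2 : ∀ u v : Fin d, b u u v = 0 := by
      intro u v
      have e1 := P1 (Pi.single u 1 + Pi.single v 1)
      have e2 := P1 (Pi.single u 1 - Pi.single v 1)
      simp [Bb, Pi.single_apply, Finset.mul_sum, add_mul, mul_add, sub_mul, mul_sub,
        Finset.sum_add_distrib, Finset.sum_sub_distrib, ite_mul, mul_ite,
        Finset.sum_ite_eq'] at e1 e2
      linarith [z1 u u, z1 u v, z1 v u, z1 v v, hsym u v u, hsym v u v, e1, e2]
    have z3 : ∀ u v : Fin d, b u v u = 0 := fun u v => (hsym u v u).trans (z2 u v)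
    refine ⟨fun i j => ⟨z1 i i, z2 i j, z1 i j⟩, ?_⟩
    intro i j k
    have e := P1 (Pi.single i 1 + Pi.single j 1 + Pi.single k 1)
    simp [Bb, Pi.single_apply, Finset.mul_sum, add_mul, mul_add,
      Finset.sum_add_distrib, ite_mul, mul_ite, Finset.sum_ite_eq', z1, z2, z3] at e
    linarith [hsym i j k, hsym i k j, hsym j i k, hsym j k i, hsym k i j, hsym k j i, e]
  · rintro ⟨B1, B2⟩
    have zb1 : ∀ u v : Fin d, b u v v = 0 := fun u v => (B1 u v).2.2
    have zb2 : ∀ u v : Fin d, b u u v = 0 := fun u v => (B1 u v).2.1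
    have zb3 : ∀ u v : Fin d, b u v u = 0 := fun u v => (hsym u v u).trans (zb2 u v)
    refine ⟨?_, ?_, ?_⟩
    · intro x
      have hexp : (∑ i, x i * Bb b x x i)
          = ∑ i, ∑ j, ∑ k, b i j k * (x i * x j * x k) := by
        simp only [Bb, Finset.mul_sum]
        exact congr3 _ _ fun i j k => by ring
      have hT : (∑ i, ∑ j, ∑ k, (b i j k + b j i k + b k i j) * (x i * x j * x k)) = 0 :=
        Finset.sum_eq_zero fun i _ => Finset.sum_eq_zero fun j _ =>
          Finset.sum_eq_zero fun k _ => by rw [B2 i j k, zero_mul]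
      have hsplit : (∑ i, ∑ j, ∑ k, (b i j k + b j i k + b k i j) * (x i * x j * x k))
          = (∑ i, ∑ j, ∑ k, b i j k * (x i * x j * x k))
          + (∑ i, ∑ j, ∑ k, b j i k * (x i * x j * x k))
          + (∑ i, ∑ j, ∑ k, b k i j * (x i * x j * x k)) := by
        simp [add_mul, Finset.sum_add_distrib]
      have h2 : (∑ i, ∑ j, ∑ k, b j i k * (x i * x j * x k))
          = ∑ i, ∑ j, ∑ k, b i j k * (x i * x j * x k) :=
        (swap12 fun i j k => b j i k * (x i * x j * x k)).trans
          (congr3 _ _ fun i j k => by ring)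
      have h3 : (∑ i, ∑ j, ∑ k, b k i j * (x i * x j * x k))
          = ∑ i, ∑ j, ∑ k, b i j k * (x i * x j * x k) :=
        (rot3 fun i j k => b k i j * (x i * x j * x k)).trans
          (congr3 _ _ fun i j k => by ring)
      rw [hexp]
      rw [hsplit, h2, h3] at hT
      linarith
    · intro x
      apply Finset.sum_eq_zero
      intro i _
      rw [(Bb_hasFDerivAt b i x).fderiv]
      rw [ContinuousLinearMap.sum_apply]
      apply Finset.sum_eq_zero
      intro j _
      rw [ContinuousLinearMap.sum_apply]
      apply Finset.sum_eq_zero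
      intro k _
      by_cases hj : j = i <;> by_cases hk : k = i <;>
        simp [hj, hk, Pi.single_apply, zb2, zb3]
    · intro j
      funext i
      simpa [Bb, Pi.single_apply, mul_ite, ite_mul, Finset.sum_ite_eq'] using zb1 i j
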